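/- Let β ∈ ℝ^p, α₁, α₂ ∈ ℝ, c₁, c₂ ∈ (0,1), and let x₁, x₂ ∈ ℝ^p satisfy βᵀx₁ ≠ βᵀx₂. If (1 − σ(α₁ + βᵀx_k))/(1 − c₁) = (1 − σ(α₂ + βᵀx_k))/(1 − c₂) for k = 1, 2, then α₁ = α₂ and c₁ = c₂. (This is the key step showing that, with unlabeled data, the intercept of the logistic model is identifiable whenever β ≠ 0: the control-to-marginal density ratio f₀(x)/f(x) = (1 − φ(x,θ))/(1 − c) evaluated at two points with different values of βᵀx determines α.) -/

import Mathlib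

/-- The logistic function `σ(t) = exp(t)/(1 + exp(t))`. -/
noncomputable def logistic (t : ℝ) : ℝ := Real.exp t / (1 + Real.exp t)

lemma one_sub_logistic (t : ℝ) : 1 - logistic t = 1 / (1 + Real.exp t) := by
  have h : (0:ℝ) < 1 + Real.exp t := by positivity
  unfold logistic
  field_simp
  ring

/-- Key identifiability step: the control-to-marginal density ratio
`(1 − σ(α + βᵀx))/(1 − c)` evaluated at two points with different values of `βᵀx`
determines the intercept `α` (and the marginal case probability `c`). -/
theorem intercept_identifiable_from_two_points
    (p : ℕ) (β : Fin p → ℝ) (α₁ α₂ c₁ c₂ : ℝ)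
    (hc₁ : c₁ ∈ Set.Ioo (0 : ℝ) 1) (hc₂ : c₂ ∈ Set.Ioo (0 : ℝ) 1)
    (x₁ x₂ : Fin p → ℝ) (hx : (∑ i, β i * x₁ i) ≠ ∑ i, β i * x₂ i)
    (h1 : (1 - logistic (α₁ + ∑ i, β i * x₁ i)) / (1 - c₁)
        = (1 - logistic (α₂ + ∑ i, β i * x₁ i)) / (1 - c₂))
    (h2 : (1 - logistic (α₁ + ∑ i, β i * x₂ i)) / (1 - c₁)
        = (1 - logistic (α₂ + ∑ i, β i * x₂ i)) / (1 - c₂)) :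
    α₁ = α₂ ∧ c₁ = c₂ := by
  set s₁ := ∑ i, β i * x₁ i with hs₁
  set s₂ := ∑ i, β i * x₂ i with hs₂
  have hd₁ : (1:ℝ) - c₁ ≠ 0 := by have := hc₁.2; linarith
  have hd₂ : (1:ℝ) - c₂ ≠ 0 := by have := hc₂.2; linarith
  set a₁ := Real.exp α₁ with ha₁
  set a₂ := Real.exp α₂ with ha₂
  set u := Real.exp s₁ with hu
  set v := Real.exp s₂ with hv
  have huv : u ≠ v := fun h => hx (Real.exp_injective h)
  have ha₁pos : 0 < a₁ := Real.exp_pos _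
  have ha₂pos : 0 < a₂ := Real.exp_pos _
  have hupos : 0 < u := Real.exp_pos _
  have hvpos : 0 < v := Real.exp_pos _
  have e1 : (1 - c₂) * (1 + a₂ * u) = (1 - c₁) * (1 + a₁ * u) := by
    rw [one_sub_logistic, one_sub_logistic, Real.exp_add, Real.exp_add] at h1
    have h1u : (0:ℝ) < 1 + a₁ * u := by positivity
    have h2u : (0:ℝ) < 1 + a₂ * u := by positivity
    field_simp at h1
    linarith
  have e2 : (1 - c₂) * (1 + a₂ * v) = (1 - c₁) * (1 + a₁ * v) := by
    rw [one_sub_logistic, one_sub_logistic, Real.exp_add, Real.exp_add] at h2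
    have h1v : (0:ℝ) < 1 + a₁ * v := by positivity
    have h2v : (0:ℝ) < 1 + a₂ * v := by positivity
    field_simp at h2
    linarith
  have key : (1 - c₂) * a₂ = (1 - c₁) * a₁ := by
    have h3 : ((1 - c₂) * a₂ - (1 - c₁) * a₁) * (u - v) = 0 := by ring_nf; nlinarith [e1, e2]
    rcases mul_eq_zero.mp h3 with h | h
    · linarith
    · exact absurd (by linarith : u = v) huv
  have hc : c₁ = c₂ := by nlinarith [e1, key]
  have ha : a₁ = a₂ := by
    have : (1 - c₁) * a₁ = (1 - c₁) * a₂ := by rw [← key, hc]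
    exact mul_left_cancel₀ hd₁ this
  exact ⟨Real.exp_injective ha, hc⟩
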